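/- Let S = ℤ_(3)[e₁, e₂] ⊂ R = ℤ_(3)[λ₁,λ₂] where e₁ = λ₁+λ₂ and e₂ = λ₁λ₂. Then R ⊗_S R ≅ ℤ_(3)[λ₁, λ₂, a]/(a² + λ₁a − λ₂a), where a = (λ₁ ⊗ 1) − (1 ⊗ λ₁) corresponds to η_R(λ₁) − λ₁ (here the isomorphism identifies 1 ⊗ λ₁ with a + λ₁). -/

import Mathlib

open MvPolynomial TensorProduct

set_option maxHeartbeats 1000000
set_option synthInstance.maxHeartbeats 1000000

instance : (Ideal.span {(3 : ℤ)}).IsPrime :=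
  (Ideal.span_singleton_prime (by norm_num)).mpr Int.prime_three

/-- `ℤ` localized at the prime `3`. -/
noncomputable abbrev Zloc3 : Type :=
  Localization.AtPrime (R := ℤ) (Ideal.span {(3 : ℤ)})

/-- `R = ℤ₍₃₎[λ₁,λ₂]`, with `λ₁ = X 0`, `λ₂ = X 1`. -/
noncomputable abbrev Rring : Type := MvPolynomial (Fin 2) Zloc3

/-- `S = ℤ₍₃₎[e₁, e₂]` with `e₁ = λ₁+λ₂`, `e₂ = λ₁λ₂`. -/
noncomputable abbrev Ssub : Subalgebra Zloc3 Rring :=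
  Algebra.adjoin Zloc3 {(X 0 + X 1 : Rring), X 0 * X 1}

/-- The target ring `ℤ₍₃₎[λ₁,λ₂,a]/(a² + λ₁a − λ₂a)`, with
`λ₁ = X 0`, `λ₂ = X 1`, `a = X 2`. -/
noncomputable abbrev Qring : Type :=
  MvPolynomial (Fin 3) Zloc3 ⧸
    (Ideal.span {(X 2 : MvPolynomial (Fin 3) Zloc3) ^ 2 + X 0 * X 2 - X 1 * X 2})

noncomputable abbrev qmk : MvPolynomial (Fin 3) Zloc3 →+* Qring :=
  Ideal.Quotient.mk _

noncomputable instance iCR : CommRing (Rring ⊗[Ssub] Rring) :=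
  { (inferInstance : CommSemiring (Rring ⊗[Ssub] Rring)),
    (inferInstance : AddCommGroupWithOne (Rring ⊗[Ssub] Rring)) with }

/-- left unit `R → Q`, `X i ↦ X i`. -/
noncomputable def fQ : Rring →ₐ[Zloc3] Qring :=
  aeval ![qmk (X 0), qmk (X 1)]

/-- right unit `R → Q`, `X 0 ↦ a + λ₁`, `X 1 ↦ λ₂ - a`. -/
noncomputable def gQ : Rring →ₐ[Zloc3] Qring :=
  aeval ![qmk (X 2 + X 0), qmk (X 1 - X 2)]

lemma rel_mem : ((X 2 : MvPolynomial (Fin 3) Zloc3) ^ 2 + X 0 * X 2 - X 1 * X 2) ∈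
    Ideal.span {(X 2 : MvPolynomial (Fin 3) Zloc3) ^ 2 + X 0 * X 2 - X 1 * X 2} :=
  Ideal.subset_span rfl

lemma hfg : ∀ s ∈ Ssub, fQ s = gQ s := by
  intro s hs
  have h : Ssub ≤ AlgHom.equalizer fQ gQ := by
    apply Algebra.adjoin_le
    rintro x (rfl | rfl)
    · show fQ _ = gQ _
      simp only [fQ, gQ, map_add, aeval_X, Matrix.cons_val_zero, Matrix.cons_val_one,
        Matrix.head_cons]
      simp only [← map_add]
      congr 1
      ring
    · show fQ _ = gQ _
      simp only [fQ, gQ, map_mul, aeval_X, Matrix.cons_val_zero, Matrix.cons_val_one,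
        Matrix.head_cons]
      simp only [← map_mul]
      rw [Ideal.Quotient.eq]
      have h2 : (X 0 : MvPolynomial (Fin 3) Zloc3) * X 1 - (X 2 + X 0) * (X 1 - X 2) =
          X 2 ^ 2 + X 0 * X 2 - X 1 * X 2 := by ring
      rw [h2]; exact rel_mem
  exact h hs

noncomputable instance iAQ : Algebra Ssub Qring :=
  @RingHom.toAlgebra Ssub Qring _ _
    ((fQ : Rring →+* Qring).comp (Subalgebra.val Ssub : Ssub →+* Rring))

instance iTQ : IsScalarTower Zloc3 Ssub Qring :=
  IsScalarTower.of_algebraMap_eq (R := Zloc3) (S := Ssub) (A := Qring)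
    (fun c => (fQ.commutes c).symm)

instance iTQ2 : IsScalarTower Ssub Ssub Qring :=
  IsScalarTower.of_algebraMap_eq (R := Ssub) (S := Ssub) (A := Qring) (fun c => rfl)

noncomputable def f' : Rring →ₐ[Ssub] Qring :=
  { fQ with commutes' := fun _ => rfl }

noncomputable def g' : Rring →ₐ[Ssub] Qring :=
  { gQ with commutes' := fun s => ((hfg s s.2).symm : gQ s = fQ s) }

noncomputable def φ : (Rring ⊗[Ssub] Rring) →ₐ[Ssub] Qring :=
  Algebra.TensorProduct.lift f' g' (fun x y => Commute.all (f' x) (g' y))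

lemma φ_tmul (a b : Rring) : φ (a ⊗ₜ[Ssub] b) = f' a * g' b :=
  Algebra.TensorProduct.lift_tmul _ _ _ a b

noncomputable def φ' : (Rring ⊗[Ssub] Rring) →ₐ[Zloc3] Qring :=
  φ.restrictScalars Zloc3

lemma tmul_comm {s : Rring} (hs : s ∈ Ssub) :
    s ⊗ₜ[Ssub] (1 : Rring) = (1 : Rring) ⊗ₜ[Ssub] s := by
  have h1 : s = (⟨s, hs⟩ : Ssub) • (1 : Rring) := by
    simp only [Algebra.smul_def, mul_one]; rfl
  conv_lhs => rw [h1]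
  rw [TensorProduct.smul_tmul, ← h1]

noncomputable def ψ₀ : MvPolynomial (Fin 3) Zloc3 →ₐ[Zloc3] (Rring ⊗[Ssub] Rring) :=
  aeval ![(X 0 : Rring) ⊗ₜ[Ssub] (1 : Rring), (X 1 : Rring) ⊗ₜ[Ssub] (1 : Rring),
    ((1 : Rring) ⊗ₜ[Ssub] (X 0 : Rring)) - ((X 0 : Rring) ⊗ₜ[Ssub] (1 : Rring))]

lemma mem1 : ((X 0 + X 1 : Rring)) ∈ Ssub := Algebra.subset_adjoin (by simp)
lemma mem2 : ((X 0 * X 1 : Rring)) ∈ Ssub := Algebra.subset_adjoin (by simp)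

lemma ψ₀_rel : ψ₀ ((X 2 : MvPolynomial (Fin 3) Zloc3) ^ 2 + X 0 * X 2 - X 1 * X 2) = 0 := by
  simp only [ψ₀, map_add, map_sub, map_mul, map_pow, aeval_X, Matrix.cons_val_zero,
    Matrix.cons_val_one, Matrix.head_cons, Matrix.cons_val_two, Matrix.tail_cons]
  set u : Rring ⊗[Ssub] Rring := (X 0 : Rring) ⊗ₜ[Ssub] (1 : Rring) with hu
  set v : Rring ⊗[Ssub] Rring := (X 1 : Rring) ⊗ₜ[Ssub] (1 : Rring) with hv
  set t : Rring ⊗[Ssub] Rring := (1 : Rring) ⊗ₜ[Ssub] (X 0 : Rring) with ht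
  have key : (t - u) ^ 2 + u * (t - u) - v * (t - u) = t * t - (u + v) * t + u * v := by ring
  rw [key]
  have h1 : u + v = (1 : Rring) ⊗ₜ[Ssub] (X 0 + X 1 : Rring) := by
    rw [hu, hv, ← TensorProduct.add_tmul, tmul_comm mem1]
  have h2 : u * v = (1 : Rring) ⊗ₜ[Ssub] (X 0 * X 1 : Rring) := by
    rw [hu, hv, Algebra.TensorProduct.tmul_mul_tmul, mul_one, tmul_comm mem2]
  rw [h1, h2, ht, Algebra.TensorProduct.tmul_mul_tmul, Algebra.TensorProduct.tmul_mul_tmul]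
  rw [mul_one, ← TensorProduct.tmul_sub, ← TensorProduct.tmul_add]
  have h3 : (X 0 * X 0 - (X 0 + X 1) * X 0 + X 0 * X 1 : Rring) = 0 := by ring
  rw [h3, TensorProduct.tmul_zero]

noncomputable def ψ : Qring →ₐ[Zloc3] (Rring ⊗[Ssub] Rring) :=
  Ideal.Quotient.liftₐ _ ψ₀ (by
    intro a ha
    rw [Ideal.mem_span_singleton] at ha
    obtain ⟨c, rfl⟩ := ha
    rw [map_mul, ψ₀_rel, zero_mul])

lemma ψ_mk (p : MvPolynomial (Fin 3) Zloc3) : ψ (qmk p) = ψ₀ p :=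
  Ideal.Quotient.liftₐ_apply _ _ _ _

lemma φψ : φ'.comp ψ = AlgHom.id Zloc3 Qring := by
  apply Ideal.Quotient.algHom_ext
  apply MvPolynomial.algHom_ext
  intro i
  fin_cases i <;>
    · simp [φ', ψ_mk, ψ₀, f', g', fQ, gQ, Ideal.Quotient.mkₐ, map_sub,
        φ_tmul]
      try ring1

lemma memC (c : Zloc3) : (C c : Rring) ∈ Ssub := by
  have : (C c : Rring) = algebraMap Zloc3 Rring c := rfl
  rw [this]; exact Subalgebra.algebraMap_mem _ c

noncomputable def incL : Rring →ₐ[Zloc3] (Rring ⊗[Ssub] Rring) :=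
  (Algebra.TensorProduct.includeLeft (S := Ssub)).restrictScalars Zloc3

lemma left_hom : (ψ.comp φ').comp incL = incL := by
  apply MvPolynomial.algHom_ext
  intro i
  fin_cases i <;>
    simp [incL, φ', ψ_mk, ψ₀, f', g', fQ, gQ, φ_tmul,
      Algebra.TensorProduct.includeLeft_apply]

lemma left_eq (a : Rring) : ψ (φ (a ⊗ₜ[Ssub] (1 : Rring))) = a ⊗ₜ[Ssub] (1 : Rring) :=
  AlgHom.congr_fun left_hom a

lemma right_eq (b : Rring) : ψ (φ ((1 : Rring) ⊗ₜ[Ssub] b)) = (1 : Rring) ⊗ₜ[Ssub] b := by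
  have key : ((ψ.comp φ').toRingHom.comp
      (Algebra.TensorProduct.includeRight : Rring →ₐ[Ssub] _).toRingHom : Rring →+* _) =
      ((Algebra.TensorProduct.includeRight : Rring →ₐ[Ssub] _).toRingHom : Rring →+* _) := by
    apply MvPolynomial.ringHom_ext
    · intro c
      show ψ (φ ((1 : Rring) ⊗ₜ[Ssub] (C c : Rring))) = (1 : Rring) ⊗ₜ[Ssub] (C c : Rring)
      rw [← tmul_comm (memC c), left_eq]
    · intro i
      fin_cases i
      · show ψ (φ ((1 : Rring) ⊗ₜ[Ssub] (X 0 : Rring))) = (1 : Rring) ⊗ₜ[Ssub] (X 0 : Rring)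
        have h1 : φ ((1 : Rring) ⊗ₜ[Ssub] (X 0 : Rring)) = qmk (X 2 + X 0) := by
          simp [f', g', fQ, gQ, φ_tmul]
        rw [h1]
        show ψ₀ (X 2 + X 0) = _
        simp only [ψ₀, map_add, aeval_X, Matrix.cons_val_zero, Matrix.cons_val_one,
          Matrix.head_cons, Matrix.cons_val_two, Matrix.tail_cons]
        abel
      · show ψ (φ ((1 : Rring) ⊗ₜ[Ssub] (X 1 : Rring))) = (1 : Rring) ⊗ₜ[Ssub] (X 1 : Rring)
        have h1 : φ ((1 : Rring) ⊗ₜ[Ssub] (X 1 : Rring)) = qmk (X 1 - X 2) := by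
          simp [f', g', fQ, gQ, φ_tmul]
        rw [h1]
        show ψ₀ (X 1 - X 2) = _
        simp only [ψ₀, map_sub, aeval_X, Matrix.cons_val_zero, Matrix.cons_val_one,
          Matrix.head_cons, Matrix.cons_val_two, Matrix.tail_cons]
        have h2 : ((X 1 : Rring) ⊗ₜ[Ssub] (1 : Rring)) -
            (((1 : Rring) ⊗ₜ[Ssub] (X 0 : Rring)) - ((X 0 : Rring) ⊗ₜ[Ssub] (1 : Rring))) =
            (((X 0 + X 1 : Rring)) ⊗ₜ[Ssub] (1 : Rring)) - ((1 : Rring) ⊗ₜ[Ssub] (X 0 : Rring)) := by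
          rw [TensorProduct.add_tmul]; ring
        rw [h2, tmul_comm mem1, ← TensorProduct.tmul_sub]
        congr 1
        ring
  exact RingHom.congr_fun key b

lemma ψφ_elt : ∀ x : Rring ⊗[Ssub] Rring, ψ (φ' x) = x := by
  intro x
  induction x using TensorProduct.induction_on with
  | zero => simp
  | tmul a b =>
      have h : a ⊗ₜ[Ssub] b = (a ⊗ₜ[Ssub] (1 : Rring)) * ((1 : Rring) ⊗ₜ[Ssub] b) := by
        rw [Algebra.TensorProduct.tmul_mul_tmul, mul_one, one_mul]
      rw [h, map_mul, map_mul]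
      show ψ (φ _) * ψ (φ _) = _
      rw [left_eq, right_eq]
  | add x y hx hy => rw [map_add, map_add, hx, hy]

noncomputable def eAlg : (Rring ⊗[Ssub] Rring) ≃ₐ[Zloc3] Qring :=
  AlgEquiv.ofAlgHom φ' ψ φψ (AlgHom.ext ψφ_elt)

/-- `R ⊗_S R ≅ ℤ₍₃₎[λ₁,λ₂,a]/(a² + λ₁a − λ₂a)`, the isomorphism sending
`λ₁ ⊗ 1 ↦ λ₁`, `λ₂ ⊗ 1 ↦ λ₂` and the right unit `1 ⊗ λ₁ ↦ a + λ₁`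
(so `a` corresponds to `η_R(λ₁) − λ₁ = 1 ⊗ λ₁ − λ₁ ⊗ 1`). -/
theorem stmt6 :
    ∃ e : (Rring ⊗[Ssub] Rring) ≃+* Qring,
      e ((X 0 : Rring) ⊗ₜ[Ssub] (1 : Rring)) = qmk (X 0) ∧
      e ((X 1 : Rring) ⊗ₜ[Ssub] (1 : Rring)) = qmk (X 1) ∧
      e ((1 : Rring) ⊗ₜ[Ssub] (X 0 : Rring)) = qmk (X 2 + X 0) := by
  refine ⟨eAlg.toRingEquiv, ?_, ?_, ?_⟩
  · show φ' ((X 0 : Rring) ⊗ₜ[Ssub] (1 : Rring)) = qmk (X 0)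
    simp [φ', f', g', fQ, gQ, φ_tmul]
  · show φ' ((X 1 : Rring) ⊗ₜ[Ssub] (1 : Rring)) = qmk (X 1)
    simp [φ', f', g', fQ, gQ, φ_tmul]
  · show φ' ((1 : Rring) ⊗ₜ[Ssub] (X 0 : Rring)) = qmk (X 2 + X 0)
    simp [φ', f', g', fQ, gQ, φ_tmul]
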